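/- Cauchy's rule for generalized polynomials: let p(y) = Σ_{i=1}^n α_i y^{ν_i} with real exponents 0 < ν_1 < ... < ν_n, real coefficients with α_n > 0, and let λ be the number of indices i < n with α_i < 0 (assume λ ≥ 1). Set M = max over i with α_i < 0 of (-λ α_i / α_n)^(1/(ν_n - ν_i)). Then p(y) ≥ 0 for all y ≥ M. -/

import Mathlib

open Finset in
theorem cauchy_rule_generalized (n : ℕ) (ν α : Fin (n + 1) → ℝ)
    (hν0 : ∀ i, 0 < ν i) (hν : StrictMono ν)
    (hαn : 0 < α (Fin.last n))
    (S : Finset (Fin (n + 1)))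
    (hS : S = Finset.univ.filter (fun i => i ≠ Fin.last n ∧ α i < 0))
    (hSne : S.Nonempty)
    (M : ℝ)
    (hM : M = S.sup' hSne
      (fun i => (-(S.card : ℝ) * α i / α (Fin.last n)) ^ ((1 : ℝ) / (ν (Fin.last n) - ν i))))
    (y : ℝ) (hy : 0 < y) (hyM : M ≤ y) :
    0 ≤ ∑ i, α i * y ^ (ν i) := by
  set L := Fin.last n with hL
  have hcard : (0 : ℝ) < S.card := by
    exact_mod_cast hSne.card_pos
  have hLS : L ∉ S := by
    simp [hS]
  have key : ∀ i ∈ S, -(α L * y ^ ν L) / S.card ≤ α i * y ^ ν i := by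
    intro i hiS
    have hmem := hS ▸ hiS
    simp only [Finset.mem_filter, Finset.mem_univ, true_and] at hmem
    obtain ⟨hne, hneg⟩ := hmem
    have hiL : i < L := lt_of_le_of_ne (Fin.le_last i) hne
    have hd : 0 < ν L - ν i := sub_pos.mpr (hν hiL)
    set b : ℝ := -(S.card : ℝ) * α i / α L with hb
    have hbpos : 0 < b := div_pos (by nlinarith) hαn
    have hcy : b ^ ((1:ℝ)/(ν L - ν i)) ≤ y :=
      le_trans (hM ▸ Finset.le_sup' (fun j => (-(S.card : ℝ) * α j / α L) ^ ((1:ℝ)/(ν L - ν j))) hiS) hyM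
    have hcd : (b ^ ((1:ℝ)/(ν L - ν i))) ^ (ν L - ν i) = b := by
      rw [← Real.rpow_mul hbpos.le, one_div_mul_cancel hd.ne', Real.rpow_one]
    have hby : b ≤ y ^ (ν L - ν i) := by
      calc b = (b ^ ((1:ℝ)/(ν L - ν i))) ^ (ν L - ν i) := hcd.symm
        _ ≤ y ^ (ν L - ν i) :=
          Real.rpow_le_rpow (Real.rpow_nonneg hbpos.le _) hcy hd.le
    have h1 : α L * b ≤ α L * y ^ (ν L - ν i) :=
      mul_le_mul_of_nonneg_left hby hαn.le
    have h2 : α L * b = -(S.card : ℝ) * α i := by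
      rw [hb]
      field_simp
    have h3 : y ^ (ν L - ν i) * y ^ (ν i) = y ^ (ν L) := by
      rw [← Real.rpow_add hy, sub_add_cancel]
    have h4 : -(S.card : ℝ) * α i * y ^ (ν i) ≤ α L * y ^ (ν L) := by
      have := mul_le_mul_of_nonneg_right h1 (Real.rpow_pos_of_pos hy (ν i)).le
      rw [h2] at this
      calc -(S.card : ℝ) * α i * y ^ (ν i) ≤ α L * y ^ (ν L - ν i) * y ^ (ν i) := this
        _ = α L * y ^ (ν L) := by rw [mul_assoc, h3]
    rw [div_le_iff₀ hcard]
    nlinarith [h4]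
  have hA : -(α L * y ^ ν L) ≤ ∑ i ∈ S, α i * y ^ ν i := by
    have hsum := Finset.sum_le_sum key
    rw [Finset.sum_const, nsmul_eq_mul] at hsum
    have heq : (S.card : ℝ) * (-(α L * y ^ ν L) / S.card) = -(α L * y ^ ν L) := by
      field_simp
    linarith [hsum, heq.ge]
  have hB : α L * y ^ ν L ≤ ∑ i ∈ Sᶜ, α i * y ^ ν i := by
    apply Finset.single_le_sum (f := fun i => α i * y ^ ν i)
    · intro i hi
      by_cases hiL : i = L
      · subst hiL
        exact (mul_pos hαn (Real.rpow_pos_of_pos hy _)).le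
      · have : i ∉ S := Finset.mem_compl.mp hi
        have hα : 0 ≤ α i := by
          by_contra hlt
          exact this (hS ▸ (Finset.mem_filter.mpr ⟨Finset.mem_univ _, hiL, lt_of_not_ge hlt⟩))
        exact mul_nonneg hα (Real.rpow_pos_of_pos hy _).le
    · exact Finset.mem_compl.mpr hLS
  rw [← Finset.sum_add_sum_compl S]
  linarith
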